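/- Define the Wilson polynomial by W_n(x^2; a,b,c,d) = (a+b)_n (a+c)_n (a+d)_n \sum_{k=0}^n ((-n)_k (n+a+b+c+d-1)_k (a+ix)_k (a-ix)_k)/((a+b)_k (a+c)_k (a+d)_k k!). Then W_n(x^2; a,b,c,d) = ((n+a+b+c+d-1)/(2n+a+b+c+d-1)) W_n(x^2; a,b,c,d+1) - (n(n+a+b-1)(n+a+c-1)(n+b+c-1)/(2n+a+b+c+d-1)) W_{n-1}(x^2; a,b,c,d+1). -/

import Mathlib

open Finset Complex

noncomputable def poch (a : ℂ) (k : ℕ) : ℂ := (ascPochhammer ℂ k).eval a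

/-- Wilson polynomial `W_n(x²; a,b,c,d)` as a function of `x`, as the terminating ₄F₃ sum
times `(a+b)_n (a+c)_n (a+d)_n`. -/
noncomputable def wilson (n : ℕ) (x a b c d : ℂ) : ℂ :=
  poch (a + b) n * poch (a + c) n * poch (a + d) n *
    ∑ k ∈ range (n + 1),
      poch (-(n : ℂ)) k * poch ((n : ℂ) + a + b + c + d - 1) k * poch (a + I * x) k *
          poch (a - I * x) k /
        (poch (a + b) k * poch (a + c) k * poch (a + d) k * (k.factorial : ℂ))

lemma poch_zero (y : ℂ) : poch y 0 = 1 := by simp [poch]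
lemma poch_succ (y : ℂ) (m : ℕ) : poch y (m + 1) = poch y m * (y + m) :=
  ascPochhammer_succ_eval m y
lemma poch_split (y : ℂ) (k l : ℕ) : poch y (k + l) = poch y k * poch (y + k) l := by
  unfold poch
  rw [← ascPochhammer_mul, Polynomial.eval_mul, Polynomial.eval_comp, Polynomial.eval_add,
    Polynomial.eval_X, Polynomial.eval_natCast]
lemma poch_succ_left (y : ℂ) (m : ℕ) : poch y (m + 1) = y * poch (y + 1) m := by
  have := poch_split y 1 m
  simpa [poch_succ, poch_zero, add_comm] using this
lemma poch_shift (s : ℂ) (k : ℕ) : s * poch (s + 1) k = poch s k * (s + k) := by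
  rw [← poch_succ_left, poch_succ]
lemma poch_neg (z : ℂ) (k : ℕ) : z * poch (1 - z) k = (z - k) * poch (-z) k := by
  induction k with
  | zero => simp [poch_zero]
  | succ k ih =>
    rw [poch_succ, poch_succ]
    push_cast
    linear_combination (1 - z + (k : ℂ)) * ih

theorem wilson_recurrence_1 (n : ℕ) (x a b c d : ℂ) (hn : 1 ≤ n)
    (hden : 2 * (n : ℂ) + a + b + c + d - 1 ≠ 0)
    (h1 : ∀ k ≤ n, poch (a + b) k ≠ 0) (h2 : ∀ k ≤ n, poch (a + c) k ≠ 0)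
    (h3 : ∀ k ≤ n, poch (a + d) k ≠ 0) (h4 : ∀ k ≤ n, poch (a + d + 1) k ≠ 0) :
    wilson n x a b c d =
      ((n : ℂ) + a + b + c + d - 1) / (2 * (n : ℂ) + a + b + c + d - 1) *
          wilson n x a b c (d + 1) -
        (n : ℂ) * ((n : ℂ) + a + b - 1) * ((n : ℂ) + a + c - 1) * ((n : ℂ) + b + c - 1) /
            (2 * (n : ℂ) + a + b + c + d - 1) *
          wilson (n - 1) x a b c (d + 1) := by
  obtain ⟨m, rfl⟩ : ∃ m, n = m + 1 := ⟨n - 1, by omega⟩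
  push_cast at hden ⊢
  simp only [wilson, Nat.add_sub_cancel]
  push_cast
  rw [show a + (d + 1) = a + d + 1 from by ring]
  simp only [Finset.mul_sum]
  rw [Finset.sum_range_succ, Finset.sum_range_succ (n := m + 1)]
  rw [eq_sub_iff_add_eq, add_right_comm, ← Finset.sum_add_distrib]
  congr 1
  · refine Finset.sum_congr rfl fun k hk => ?_
    have hk' : k ≤ m := by simpa [Nat.lt_succ_iff] using hk
    have e1 := h1 k (by omega)
    have e2 := h2 k (by omega)
    have e3 := h3 k (by omega)
    have e4 := h4 k (by omega)
    have efac : ((k.factorial : ℕ) : ℂ) ≠ 0 := Nat.cast_ne_zero.2 (Nat.factorial_ne_zero _)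
    have Q1 := poch_split (a + b) k (m + 1 - k)
    rw [show k + (m + 1 - k) = m + 1 from by omega] at Q1
    have Q2 := poch_split (a + c) k (m + 1 - k)
    rw [show k + (m + 1 - k) = m + 1 from by omega] at Q2
    have E3 := poch_split (a + d) k ((m - k) + 1)
    rw [show k + ((m - k) + 1) = m + 1 from by omega, poch_succ_left (a + d + (k:ℂ)) (m - k),
      show (a + d + (k:ℂ) + 1) = a + d + 1 + (k:ℂ) from by ring] at E3
    have E4 := poch_split (a + d + 1) k ((m - k) + 1)
    rw [show k + ((m - k) + 1) = m + 1 from by omega, poch_succ (a + d + 1 + (k:ℂ)) (m - k),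
      Nat.cast_sub hk'] at E4
    have E5 := poch_split (a + d + 1) k (m - k)
    rw [show k + (m - k) = m from by omega] at E5
    have E6 := poch_shift ((m:ℂ) + 1 + a + b + c + d - 1) k
    rw [show ((m:ℂ) + 1 + a + b + c + d - 1 + 1) = (m:ℂ) + 1 + a + b + c + d from by ring] at E6
    have E7 := poch_neg ((m:ℂ) + 1) k
    rw [show (1 - ((m:ℂ) + 1)) = -(m:ℂ) from by ring,
      show (-((m:ℂ) + 1)) = -1 + -(m:ℂ) from by ring] at E7
    have R1 := (poch_succ (a + b) m).symm.trans Q1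
    have R2 := (poch_succ (a + c) m).symm.trans Q2
    rw [show ((m:ℂ) + 1 + a + b + c + (d + 1) - 1) = ((m:ℂ) + 1 + a + b + c + d - 1) + 1 from by ring,
      show ((m:ℂ) + a + b + c + (d + 1) - 1) = ((m:ℂ) + 1 + a + b + c + d - 1) from by ring]
    rw [Q1, Q2, E3, E4, E5]
    field_simp
    have hD : (2 * ((m:ℂ) + 1) + a + b + c + d - 1) *
        (poch (a + b) k * poch (a + c) k * poch (a + d + 1) k * (k.factorial : ℂ)) ≠ 0 :=
      mul_ne_zero hden (mul_ne_zero (mul_ne_zero (mul_ne_zero e1 e2) e4) efac)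
    have hD' : ((m:ℂ) + 1) * 2 + a + b + c + d - 1 ≠ 0 := by rw [show ((m:ℂ) + 1) * 2 + a + b + c + d - 1 = 2 * ((m:ℂ) + 1) + a + b + c + d - 1 from by ring]; exact hden
    rw [show (-1 + -(m:ℂ)) = -((m:ℂ) + 1) from by ring] at E7
    rw [show (m:ℂ) + 1 + a + b + c + d - 1 + 1 = (m:ℂ) + 1 + a + b + c + d from by ring,
      mul_add, mul_div_assoc', add_div' _ _ _ hD', div_left_inj' hD']
    linear_combination
      ((poch (a + d + 1 + (k:ℂ)) (m - k) * poch ((m:ℂ) + 1 + a + b + c + d - 1) k * poch (a + I * x) k * poch (a - I * x) k) * ((m:ℂ) + 1) * ((m:ℂ) + 1 + a + c - 1) * ((m:ℂ) + 1 + b + c - 1) * poch (a + c) m * poch (-(m:ℂ)) k) * R1 +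
      ((poch (a + d + 1 + (k:ℂ)) (m - k) * poch ((m:ℂ) + 1 + a + b + c + d - 1) k * poch (a + I * x) k * poch (a - I * x) k) * ((m:ℂ) + 1) * ((m:ℂ) + 1 + b + c - 1) * (poch (a + b) k * poch (a + b + (k:ℂ)) (m + 1 - k)) * poch (-(m:ℂ)) k) * R2 +
      ((poch (a + d + 1 + (k:ℂ)) (m - k) * poch ((m:ℂ) + 1 + a + b + c + d - 1) k * poch (a + I * x) k * poch (a - I * x) k) * ((m:ℂ) + 1 + b + c - 1) * (poch (a + b) k * poch (a + b + (k:ℂ)) (m + 1 - k)) * (poch (a + c) k * poch (a + c + (k:ℂ)) (m + 1 - k))) * E7 -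
      ((poch (a + d + 1 + (k:ℂ)) (m - k) * poch (a + I * x) k * poch (a - I * x) k) * (poch (a + b) k * poch (a + b + (k:ℂ)) (m + 1 - k)) * (poch (a + c) k * poch (a + c + (k:ℂ)) (m + 1 - k)) * poch (-((m:ℂ) + 1)) k * (a + d + (m:ℂ) + 1)) * E6
  · have e1 := h1 (m+1) le_rfl
    have e2 := h2 (m+1) le_rfl
    have e3 := h3 (m+1) le_rfl
    have e4 := h4 (m+1) le_rfl
    have efac : (((m+1).factorial : ℕ) : ℂ) ≠ 0 := Nat.cast_ne_zero.2 (Nat.factorial_ne_zero _)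
    rw [show ((m:ℂ) + 1 + a + b + c + (d + 1) - 1) = ((m:ℂ) + 1 + a + b + c + d - 1) + 1 from by ring]
    have E6 := poch_shift ((m:ℂ) + 1 + a + b + c + d - 1) (m+1)
    rw [show ((m:ℂ) + 1 + a + b + c + d - 1 + 1) = (m:ℂ) + 1 + a + b + c + d from by ring] at E6
    push_cast at E6
    field_simp
    have hD : (2 * ((m:ℂ) + 1) + a + b + c + d - 1) *
        (poch (a + b) (m+1) * poch (a + c) (m+1) * poch (a + d + 1) (m+1) * ((m+1).factorial : ℂ)) ≠ 0 :=
      mul_ne_zero hden (mul_ne_zero (mul_ne_zero (mul_ne_zero e1 e2) e4) efac)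
    have hD' : ((m:ℂ) + 1) * 2 + a + b + c + d - 1 ≠ 0 := by rw [show ((m:ℂ) + 1) * 2 + a + b + c + d - 1 = 2 * ((m:ℂ) + 1) + a + b + c + d - 1 from by ring]; exact hden
    rw [show (m:ℂ) + 1 + a + b + c + d - 1 + 1 = (m:ℂ) + 1 + a + b + c + d from by ring, eq_div_iff hD']
    linear_combination
      (-(poch (-((m:ℂ) + 1)) (m+1) * poch (a + I * x) (m+1) * poch (a - I * x) (m+1))) * E6
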